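/- A classical formula A over the extended atom set is equivalent (valid over all Epstein models viewed as classical models) to the standard translation St(φ) of some Epstein formula φ if and only if A is S-set invariant, i.e. whenever M ⊨_CPL A and N ∈ S^M then N ⊨_CPL A. -/
import Mathlib


/-- Epstein formulas: letters, ¬, ∨, ∧, →, ↔, △ (tri), ↪ (hook). -/
inductive EFor : Type
  | var : ℕ → EFor
  | neg : EFor → EFor
  | or : EFor → EFor → EFor
  | and : EFor → EFor → EFor
  | imp : EFor → EFor → EFor
  | iff : EFor → EFor → EFor
  | tri : EFor → EFor → EFor
  | hook : EFor → EFor → EFor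
  deriving DecidableEq

/-- An Epstein model: a valuation of letters and a binary relation on formulas. -/
structure EModel : Type where
  v : ℕ → Prop
  R : Set (EFor × EFor)

/-- Epstein satisfaction. -/
def sat (M : EModel) : EFor → Prop
  | .var n => M.v n
  | .neg φ => ¬ sat M φ
  | .or φ ψ => sat M φ ∨ sat M ψ
  | .and φ ψ => sat M φ ∧ sat M ψ
  | .imp φ ψ => sat M φ → sat M ψ
  | .iff φ ψ => (sat M φ ↔ sat M ψ)
  | .tri φ ψ => (sat M φ ∧ sat M ψ) ∧ (φ, ψ) ∈ M.R
  | .hook φ ψ => (sat M φ → sat M ψ) ∧ (φ, ψ) ∈ M.R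

/-- The Omega set of a model. -/
def Omega (M : EModel) : Set (EFor × EFor) :=
  {p | ¬ sat M (.imp p.1 p.2)}

/-- The S-set of a model. -/
def Sset (M : EModel) : Set EModel :=
  {N | N.v = M.v ∧ M.R \ Omega M ⊆ N.R ∧ N.R ⊆ M.R ∪ Omega M}

/-- The theory of a model. -/
def Th (M : EModel) : Set EFor := {φ | sat M φ}

/-- Substitution: extend a map on letters homomorphically. -/
def esubst (σ : ℕ → EFor) : EFor → EFor
  | .var n => σ n
  | .neg φ => .neg (esubst σ φ)
  | .or φ ψ => .or (esubst σ φ) (esubst σ ψ)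
  | .and φ ψ => .and (esubst σ φ) (esubst σ ψ)
  | .imp φ ψ => .imp (esubst σ φ) (esubst σ ψ)
  | .iff φ ψ => .iff (esubst σ φ) (esubst σ ψ)
  | .tri φ ψ => .tri (esubst σ φ) (esubst σ ψ)
  | .hook φ ψ => .hook (esubst σ φ) (esubst σ ψ)

/-- A boolean homomorphism: any assignment respecting the boolean connectives
(no constraint on △, ↪, which are treated as atoms). -/
def BoolHom (w : EFor → Prop) : Prop :=
  (∀ φ, w (.neg φ) ↔ ¬ w φ) ∧
  (∀ φ ψ, w (.or φ ψ) ↔ (w φ ∨ w ψ)) ∧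
  (∀ φ ψ, w (.and φ ψ) ↔ (w φ ∧ w ψ)) ∧
  (∀ φ ψ, w (.imp φ ψ) ↔ (w φ → w ψ)) ∧
  (∀ φ ψ, w (.iff φ ψ) ↔ (w φ ↔ w ψ))

/-- Classical tautologies in the language of Epstein logic. -/
def Taut (φ : EFor) : Prop := ∀ w, BoolHom w → w φ

/-- The logic FΛ: least set containing CPL, the two Epstein axioms and Λ,
closed under uniform substitution and modus ponens. -/
inductive FLam (Λ : Set EFor) : EFor → Prop
  | taut {φ} : Taut φ → FLam Λ φ
  | ax1 : FLam Λ (.imp (.hook (.var 0) (.var 1)) (.imp (.var 0) (.var 1)))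
  | ax2 : FLam Λ (.iff (.tri (.var 0) (.var 1))
      (.and (.hook (.var 0) (.var 1)) (.and (.var 0) (.var 1))))
  | extra {φ} : φ ∈ Λ → FLam Λ φ
  | subst {φ} (σ : ℕ → EFor) : FLam Λ φ → FLam Λ (esubst σ φ)
  | mp {φ ψ} : FLam Λ (.imp φ ψ) → FLam Λ φ → FLam Λ ψ

/-- The base logic F. -/
def Fmem : EFor → Prop := FLam ∅

/-- Hilbert derivability from premises Γ over a logic L. -/
inductive Deriv (L : EFor → Prop) (Γ : Set EFor) : EFor → Prop
  | thm {φ} : L φ → Deriv L Γ φ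
  | prem {φ} : φ ∈ Γ → Deriv L Γ φ
  | mp {φ ψ} : Deriv L Γ (.imp φ ψ) → Deriv L Γ φ → Deriv L Γ ψ

/-- Validity on a relation: true in all models built over it. -/
def relSat (R : Set (EFor × EFor)) (φ : EFor) : Prop :=
  ∀ v : ℕ → Prop, sat ⟨v, R⟩ φ

def etop : EFor := .or (.var 0) (.neg (.var 0))
def ebot : EFor := .neg etop

/-- Classical propositional formulas over the extended atom set
Φ ∪ {p_(φ,ψ) : φ,ψ ∈ FOR}. -/
inductive CFor : Type
  | atom : ℕ ⊕ (EFor × EFor) → CFor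
  | neg : CFor → CFor
  | or : CFor → CFor → CFor
  | and : CFor → CFor → CFor
  | imp : CFor → CFor → CFor
  | iff : CFor → CFor → CFor

/-- An Epstein model viewed as a classical model over the extended atoms. -/
def csat (M : EModel) : CFor → Prop
  | .atom (.inl n) => M.v n
  | .atom (.inr p) => p ∈ M.R
  | .neg A => ¬ csat M A
  | .or A B => csat M A ∨ csat M B
  | .and A B => csat M A ∧ csat M B
  | .imp A B => csat M A → csat M B
  | .iff A B => (csat M A ↔ csat M B)

/-- The standard translation of Epstein formulas into CPL. -/
def St : EFor → CFor
  | .var n => .atom (.inl n)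
  | .neg φ => .neg (St φ)
  | .or φ ψ => .or (St φ) (St ψ)
  | .and φ ψ => .and (St φ) (St ψ)
  | .imp φ ψ => .imp (St φ) (St ψ)
  | .iff φ ψ => .iff (St φ) (St ψ)
  | .hook φ ψ => .and (.imp (St φ) (St ψ)) (.atom (.inr (φ, ψ)))
  | .tri φ ψ => .and (.and (St φ) (St ψ)) (.atom (.inr (φ, ψ)))

/-- A CPL formula is S-set invariant iff its truth is preserved within S-sets. -/
def SsetInvariant (A : CFor) : Prop :=
  ∀ M N : EModel, csat M A → N ∈ Sset M → csat N A


lemma satInv {M N : EModel} (h : N ∈ Sset M) : ∀ φ, sat M φ ↔ sat N φ := by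
  obtain ⟨hv, h1, h2⟩ := h
  intro φ
  induction φ with
  | var n => simp [sat, hv]
  | neg φ ih => simp [sat, ih]
  | or φ ψ ih1 ih2 => simp [sat, ih1, ih2]
  | and φ ψ ih1 ih2 => simp [sat, ih1, ih2]
  | imp φ ψ ih1 ih2 => simp [sat, ih1, ih2]
  | iff φ ψ ih1 ih2 => simp [sat, ih1, ih2]
  | tri φ ψ ih1 ih2 =>
    simp only [sat]
    constructor
    · rintro ⟨⟨ha, hb⟩, hr⟩
      refine ⟨⟨ih1.mp ha, ih2.mp hb⟩, h1 ⟨hr, ?_⟩⟩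
      intro hΩ
      exact hΩ (fun _ => hb)
    · rintro ⟨⟨ha, hb⟩, hr⟩
      have hb' := ih2.mpr hb
      refine ⟨⟨ih1.mpr ha, hb'⟩, ?_⟩
      rcases h2 hr with hr' | hΩ
      · exact hr'
      · exact absurd (fun _ => hb') hΩ
  | hook φ ψ ih1 ih2 =>
    simp only [sat]
    constructor
    · rintro ⟨h, hr⟩
      refine ⟨fun a => ih2.mp (h (ih1.mpr a)), h1 ⟨hr, ?_⟩⟩
      intro hΩ
      exact hΩ h
    · rintro ⟨h, hr⟩
      have hM : sat M φ → sat M ψ := fun a => ih2.mpr (h (ih1.mp a))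
      refine ⟨hM, ?_⟩
      rcases h2 hr with hr' | hΩ
      · exact hr'
      · exact absurd hM hΩ

lemma stSat (M : EModel) : ∀ φ, csat M (St φ) ↔ sat M φ := by
  intro φ
  induction φ with
  | var n => simp [St, csat, sat]
  | neg φ ih => simp [St, csat, sat, ih]
  | or φ ψ ih1 ih2 => simp [St, csat, sat, ih1, ih2]
  | and φ ψ ih1 ih2 => simp [St, csat, sat, ih1, ih2]
  | imp φ ψ ih1 ih2 => simp [St, csat, sat, ih1, ih2]
  | iff φ ψ ih1 ih2 => simp [St, csat, sat, ih1, ih2]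
  | tri φ ψ ih1 ih2 =>
    simp only [St, csat, sat, ih1, ih2]
  | hook φ ψ ih1 ih2 =>
    simp only [St, csat, sat, ih1, ih2]

lemma ssetSymm {M N : EModel} (h : N ∈ Sset M) : M ∈ Sset N := by
  have hΩ : Omega N = Omega M := by
    ext p
    simp only [Omega, Set.mem_setOf_eq]
    rw [satInv h (.imp p.1 p.2)]
  obtain ⟨hv, h1, h2⟩ := h
  refine ⟨hv.symm, ?_, ?_⟩
  · rw [hΩ]
    intro p hp
    rcases h2 hp.1 with h' | h'
    · exact h'
    · exact absurd h' hp.2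
  · rw [hΩ]
    intro p hp
    by_cases hpΩ : p ∈ Omega M
    · exact Or.inr hpΩ
    · exact Or.inl (h1 ⟨hp, hpΩ⟩)

/-- Back-translation of a classical formula into an Epstein formula. -/
def Tr : CFor → EFor
  | .atom (.inl n) => .var n
  | .atom (.inr p) => .or (.hook p.1 p.2) (.neg (.imp p.1 p.2))
  | .neg A => .neg (Tr A)
  | .or A B => .or (Tr A) (Tr B)
  | .and A B => .and (Tr A) (Tr B)
  | .imp A B => .imp (Tr A) (Tr B)
  | .iff A B => .iff (Tr A) (Tr B)

lemma trSat (P : EModel) (hP : ∀ p : EFor × EFor, ¬ sat P (.imp p.1 p.2) → p ∈ P.R) :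
    ∀ A, csat P A ↔ sat P (Tr A) := by
  intro A
  induction A with
  | atom a =>
    rcases a with n | p
    · simp [Tr, csat, sat]
    · simp only [Tr, csat, sat]
      by_cases h : sat P p.1 → sat P p.2
      · constructor
        · intro hr
          exact Or.inl ⟨h, hr⟩
        · rintro (⟨_, hr⟩ | hn)
          · exact hr
          · exact absurd h hn
      · constructor
        · intro _
          exact Or.inr h
        · intro _
          exact hP p h
  | neg A ih => simp [Tr, csat, sat, ih]
  | or A B ih1 ih2 => simp [Tr, csat, sat, ih1, ih2]
  | and A B ih1 ih2 => simp [Tr, csat, sat, ih1, ih2]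
  | imp A B ih1 ih2 => simp [Tr, csat, sat, ih1, ih2]
  | iff A B ih1 ih2 => simp [Tr, csat, sat, ih1, ih2]

/-- A is equivalent to the standard translation of some Epstein
formula iff A is S-set invariant. -/
theorem stmt6 (A : CFor) :
    (∃ φ : EFor, ∀ M : EModel, csat M A ↔ csat M (St φ)) ↔ SsetInvariant A := by
  constructor
  · rintro ⟨φ, hφ⟩ M N hM hN
    rw [hφ] at hM ⊢
    rw [stSat] at hM ⊢
    exact (satInv hN φ).mp hM
  · intro hInv
    refine ⟨Tr A, fun M => ?_⟩
    set N : EModel := ⟨M.v, M.R ∪ Omega M⟩ with hNdef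
    have hN : N ∈ Sset M := by
      refine ⟨rfl, ?_, le_refl _⟩
      intro p hp
      exact Or.inl hp.1
    have hsat := satInv hN
    have hNgood : ∀ p : EFor × EFor, ¬ sat N (.imp p.1 p.2) → p ∈ N.R := by
      intro p hp
      refine Or.inr ?_
      intro hM'
      exact hp ((hsat (.imp p.1 p.2)).mp hM')
    have key := trSat N hNgood A
    have hMA : csat M A ↔ csat N A :=
      ⟨fun h => hInv M N h hN, fun h => hInv N M h (ssetSymm hN)⟩
    rw [stSat, hsat (Tr A), hMA, key]
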